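/- Let (K_t)_{t∈ℤ} be a stationary process over natural numbers and let V(t) := E[card{K_1,...,K_t}] be the expected number of distinct values among the first t terms. Then lim_{t→∞} V(t)/t = 0. -/

import Mathlib

open MeasureTheory Filter

/-- The block (K_{a+1},...,K_{a+s}) of a process. -/
def blockProc {Ω S : Type*} (K : ℤ → Ω → S) (a : ℤ) (s : ℕ) : Ω → (Fin s → S) :=
  fun ω i => K (a + 1 + (i : ℕ)) ω

/-- Expected number of distinct values among K_1,...,K_t. -/
noncomputable def Vvoc {Ω : Type*} [MeasurableSpace Ω] (μ : Measure Ω)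
    (K : ℤ → Ω → ℕ) (t : ℕ) : ℝ :=
  ∫ ω, ((Finset.image (fun i : Fin t => K (1 + (i : ℕ)) ω) Finset.univ).card : ℝ) ∂μ

private lemma card_bound_aux (t g : ℕ) (f : Fin t → ℕ) :
    (Finset.image f Finset.univ).card ≤ (g+1) + (Finset.univ.filter (fun i => g < f i)).card := by
  have hsub : Finset.image f Finset.univ ⊆
      Finset.range (g+1) ∪ Finset.image f (Finset.univ.filter (fun i => g < f i)) := by
    intro a ha
    simp only [Finset.mem_image, Finset.mem_univ, true_and] at ha
    obtain ⟨i, rfl⟩ := ha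
    rcases le_or_gt (f i) g with h | h
    · exact Finset.mem_union_left _ (Finset.mem_range.2 (Nat.lt_succ_of_le h))
    · exact Finset.mem_union_right _
        (Finset.mem_image.2 ⟨i, Finset.mem_filter.2 ⟨Finset.mem_univ _, h⟩, rfl⟩)
  calc (Finset.image f Finset.univ).card ≤ _ := Finset.card_le_card hsub
    _ ≤ (Finset.range (g+1)).card
        + (Finset.image f (Finset.univ.filter (fun i => g < f i))).card :=
        Finset.card_union_le _ _
    _ ≤ (g+1) + (Finset.univ.filter (fun i => g < f i)).card := by
        simp [Finset.card_image_le]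

private lemma marg_aux {Ω : Type*} [MeasurableSpace Ω] (μ : Measure Ω)
    (K : ℤ → Ω → ℕ) (hmeas : ∀ t, Measurable (K t))
    (hstat : ∀ (a : ℤ) (s : ℕ),
      Measure.map (blockProc K a s) μ = Measure.map (blockProc K 0 s) μ)
    (a : ℤ) : Measure.map (K (a+1)) μ = Measure.map (K 1) μ := by
  have hb : ∀ b : ℤ, Measurable (blockProc K b 1) :=
    fun b => measurable_pi_lambda _ (fun i => hmeas _)
  have key : ∀ b : ℤ, Measure.map (K (b+1)) μ
      = (Measure.map (blockProc K b 1) μ).map (fun v : Fin 1 → ℕ => v 0) := by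
    intro b
    rw [Measure.map_map (measurable_pi_apply 0) (hb b)]
    congr 1
    funext ω
    simp [blockProc, Function.comp]
  rw [key a, hstat a 1]
  have := key 0
  norm_num at this
  rw [this]

private lemma vvoc_bound {Ω : Type*} [MeasurableSpace Ω] (μ : Measure Ω)
    [IsProbabilityMeasure μ]
    (K : ℤ → Ω → ℕ) (hmeas : ∀ t, Measurable (K t))
    (hstat : ∀ (a : ℤ) (s : ℕ),
      Measure.map (blockProc K a s) μ = Measure.map (blockProc K 0 s) μ)
    (t g : ℕ) :
    Vvoc μ K t ≤ (g+1 : ℝ) + t * (μ {ω | g < K 1 ω}).toReal := by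
  set S : Fin t → Set Ω := fun i => {ω | g < K (1 + (i : ℕ)) ω} with hSdef
  have hS : ∀ i, MeasurableSet (S i) := fun i => (hmeas _) MeasurableSet.of_discrete
  have hvec : Measurable (fun ω => (fun i : Fin t => K (1 + (i : ℕ)) ω)) :=
    measurable_pi_lambda _ (fun i => hmeas _)
  have hcard : Measurable (fun ω =>
      ((Finset.image (fun i : Fin t => K (1 + (i : ℕ)) ω) Finset.univ).card : ℝ)) := by
    have h : Measurable (fun v : Fin t → ℕ => ((Finset.image v Finset.univ).card : ℝ)) :=
      measurable_of_countable _
    exact h.comp hvec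
  have hint1 : Integrable (fun ω =>
      ((Finset.image (fun i : Fin t => K (1 + (i : ℕ)) ω) Finset.univ).card : ℝ)) μ := by
    apply (integrable_const (t : ℝ)).mono' hcard.aestronglyMeasurable
    filter_upwards with ω
    rw [Real.norm_eq_abs, abs_of_nonneg (by positivity)]
    exact_mod_cast (Finset.card_image_le.trans (by simp))
  have hindint : ∀ i, Integrable ((S i).indicator (fun _ => (1:ℝ))) μ :=
    fun i => (integrable_const (1:ℝ)).indicator (hS i)
  have hrhsint : Integrable
      (fun ω => (g+1 : ℝ) + ∑ i : Fin t, (S i).indicator (fun _ => (1:ℝ)) ω) μ :=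
    (integrable_const _).add (integrable_finset_sum _ (fun i _ => hindint i))
  have hptw : ∀ ω, ((Finset.image (fun i : Fin t => K (1 + (i : ℕ)) ω) Finset.univ).card : ℝ)
      ≤ (g+1 : ℝ) + ∑ i : Fin t, (S i).indicator (fun _ => (1:ℝ)) ω := by
    intro ω
    have h1 := card_bound_aux t g (fun i : Fin t => K (1 + (i : ℕ)) ω)
    have h2 : ((Finset.univ.filter (fun i : Fin t => g < K (1 + (i : ℕ)) ω)).card : ℝ)
        = ∑ i : Fin t, (S i).indicator (fun _ => (1:ℝ)) ω := by
      rw [Finset.card_filter]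
      push_cast
      apply Finset.sum_congr rfl
      intro i _
      rw [Set.indicator_apply]
      simp [hSdef, Set.mem_setOf_eq]
    calc ((Finset.image (fun i : Fin t => K (1 + (i : ℕ)) ω) Finset.univ).card : ℝ)
        ≤ ((g+1 : ℕ) : ℝ) + ((Finset.univ.filter (fun i : Fin t => g < K (1 + (i : ℕ)) ω)).card : ℝ) := by
          exact_mod_cast h1
      _ = (g+1 : ℝ) + ∑ i : Fin t, (S i).indicator (fun _ => (1:ℝ)) ω := by
          rw [h2]; push_cast; ring
  have hmarg : ∀ i : Fin t, μ (S i) = μ {ω | g < K 1 ω} := by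
    intro i
    have hmap := marg_aux μ K hmeas hstat ((i : ℕ) : ℤ)
    have hms : MeasurableSet {x : ℕ | g < x} := MeasurableSet.of_discrete
    have e1 : μ (S i) = (Measure.map (K (1 + (i : ℕ))) μ) {x | g < x} := by
      rw [Measure.map_apply (hmeas _) hms]; rfl
    have e2 : μ {ω | g < K 1 ω} = (Measure.map (K 1) μ) {x | g < x} := by
      rw [Measure.map_apply (hmeas _) hms]; rfl
    rw [e1, e2]
    have : (1 + (i : ℕ) : ℤ) = ((i : ℕ) : ℤ) + 1 := add_comm _ _
    rw [this, hmap]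
  calc Vvoc μ K t ≤ ∫ ω, ((g+1 : ℝ) + ∑ i : Fin t, (S i).indicator (fun _ => (1:ℝ)) ω) ∂μ :=
        integral_mono hint1 hrhsint hptw
    _ = (g+1 : ℝ) + ∑ i : Fin t, (μ (S i)).toReal := by
        rw [integral_add (integrable_const _) (integrable_finset_sum _ (fun i _ => hindint i)),
          integral_finset_sum _ (fun i _ => hindint i)]
        norm_num
        refine Finset.sum_congr rfl (fun i _ => ?_)
        rw [integral_indicator_const (1:ℝ) (hS i)]
        simp
        rfl
    _ = (g+1 : ℝ) + t * (μ {ω | g < K 1 ω}).toReal := by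
        simp only [hmarg]
        rw [Finset.sum_const, Finset.card_univ, Fintype.card_fin, nsmul_eq_mul]

/-- For a stationary process over natural numbers, the expected vocabulary rate
V(t)/t tends to 0. -/
theorem stmt8 {Ω : Type*} [MeasurableSpace Ω] (μ : Measure Ω) [IsProbabilityMeasure μ]
    (K : ℤ → Ω → ℕ) (hmeas : ∀ t, Measurable (K t))
    (hstat : ∀ (a : ℤ) (s : ℕ),
      Measure.map (blockProc K a s) μ = Measure.map (blockProc K 0 s) μ) :
    Tendsto (fun t : ℕ => Vvoc μ K t / t) atTop (nhds 0) := by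
  -- the tail probability tends to zero
  have hp : Tendsto (fun g : ℕ => (μ {ω | g < K 1 ω}).toReal) atTop (nhds 0) := by
    have hms : ∀ g : ℕ, MeasurableSet {ω | g < K 1 ω} :=
      fun g => (hmeas 1) MeasurableSet.of_discrete
    have hmono : Antitone (fun g : ℕ => {ω | g < K 1 ω}) := by
      intro a b hab ω hω
      exact lt_of_le_of_lt hab hω
    have hint : (⋂ g : ℕ, {ω | g < K 1 ω}) = ∅ := by
      ext ω
      simp only [Set.mem_iInter, Set.mem_setOf_eq, Set.mem_empty_iff_false, iff_false,
        not_forall, not_lt]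
      exact ⟨K 1 ω, le_rfl⟩
    have h := tendsto_measure_iInter_atTop (fun g => (hms g).nullMeasurableSet) hmono
      ⟨0, measure_ne_top μ _⟩
    rw [hint, measure_empty] at h
    exact (ENNReal.tendsto_toReal ENNReal.zero_ne_top).comp h
  have hnonneg : ∀ t : ℕ, 0 ≤ Vvoc μ K t := by
    intro t
    apply integral_nonneg
    intro ω
    positivity
  rw [Metric.tendsto_atTop]
  intro ε hε
  -- choose g with tail probability < ε/2
  obtain ⟨g, hg⟩ := (hp.eventually (eventually_lt_nhds (show (0:ℝ) < ε/2 by linarith))).exists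
  -- choose N with (g+1)/t < ε/2 for t ≥ N
  have hNlim : Tendsto (fun t : ℕ => (g+1 : ℝ) / t) atTop (nhds 0) :=
    tendsto_const_div_atTop_nhds_zero_nat _
  obtain ⟨N, hN⟩ := eventually_atTop.mp
    (hNlim.eventually (eventually_lt_nhds (show (0:ℝ) < ε/2 by linarith)))
  refine ⟨max N 1, fun t ht => ?_⟩
  have ht1 : 1 ≤ t := le_trans (le_max_right N 1) ht
  have htN : N ≤ t := le_trans (le_max_left N 1) ht
  have htpos : (0:ℝ) < t := by exact_mod_cast ht1
  rw [Real.dist_eq, sub_zero, abs_of_nonneg (div_nonneg (hnonneg t) htpos.le)]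
  have hb := vvoc_bound μ K hmeas hstat t g
  have : Vvoc μ K t / t ≤ (g+1 : ℝ) / t + (μ {ω | g < K 1 ω}).toReal := by
    rw [div_add' _ _ _ htpos.ne']
    gcongr
    linarith [hb]
  calc Vvoc μ K t / t ≤ (g+1 : ℝ) / t + (μ {ω | g < K 1 ω}).toReal := this
    _ < ε/2 + ε/2 := add_lt_add (hN t htN) hg
    _ = ε := by ring
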